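/- Let q be an odd prime power and l an odd positive integer. Let D be a projective half-point set in 𝔽_{q^l}^* over 𝔽_q, i.e., D is a union of cosets of the subgroup S of nonzero squares of 𝔽_q, and |D ∩ c| = (q-1)/2 for every coset c of 𝔽_q^* in 𝔽_{q^l}^*. Then |D| = (q^l - 1)/2, and for every g ∈ 𝔽_{q^l}^* and primitive element ω of 𝔽_q: |gD ∩ R| + |gω^{-1}D ∩ R| = q^{l-1}, where R = {x ∈ 𝔽_{q^l}^* : tr_{q^l/q}(x) = 1}. -/
import Mathlib


open Finset
open scoped Pointwise Classical
open Polynomial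

/-- The relative trace `x ↦ ∑_{i<l} x^{q^i}`. -/
def relTrace {F : Type*} [CommRing F] (q l : ℕ) (x : F) : F :=
  ∑ i ∈ Finset.range l, x ^ q ^ i

/-- The embedding `𝔽_q^* → 𝔽_{q^l}^*`. -/
def unitsMapAlg (K F : Type*) [Field K] [Field F] [Algebra K F] : Kˣ →* Fˣ :=
  Units.map (algebraMap K F : K →+* F).toMonoidHom

/-- `D ⊆ 𝔽_{q^l}^*` is a projective half-point set over `𝔽_q`: it is a union of
cosets of the group of nonzero squares of `𝔽_q`, and it meets every coset of
`𝔽_q^*` in exactly `(q-1)/2` elements. -/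
def IsHalfPointSet (K F : Type*) [Field K] [Field F] [Fintype K] [Fintype F]
    [Algebra K F] (D : Finset Fˣ) : Prop :=
  (∀ x ∈ D, ∀ y : Kˣ, IsSquare y → x * unitsMapAlg K F y ∈ D) ∧
    ∀ g : Fˣ,
      (D.filter (fun x : Fˣ => ∃ y : Kˣ, x = g * unitsMapAlg K F y)).card =
        (Fintype.card K - 1) / 2

lemma traceFiberCard {K F : Type*} [Field K] [Field F] [Fintype K] [Fintype F]
    [Algebra K F] (q l : ℕ) (hq : Fintype.card K = q) (hq3 : 3 ≤ q)
    (hF : Fintype.card F = q ^ l) (hl0 : 0 < l) :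
    ((univ : Finset Fˣ).filter (fun x : Fˣ => relTrace q l (x : F) = 1)).card = q ^ (l - 1) := by
  classical
  -- characteristic
  set p := ringChar K with hpdef
  obtain ⟨m, hp, hqp⟩ := FiniteField.card K p
  rw [hq] at hqp
  haveI : CharP F p := charP_of_injective_ringHom (algebraMap K F).injective p
  haveI : ExpChar F p := ExpChar.prime hp
  have hq2 : 2 ≤ q := by omega
  -- additivity
  have htr_add : ∀ x y : F, relTrace q l (x + y) = relTrace q l x + relTrace q l y := by
    intro x y
    unfold relTrace
    rw [← Finset.sum_add_distrib]
    refine Finset.sum_congr rfl fun i _ => ?_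
    have : (q : ℕ) ^ i = p ^ ((m : ℕ) * i) := by rw [hqp, ← pow_mul]
    rw [this]
    exact add_pow_expChar_pow ..
  have htr_zero : relTrace q l (0 : F) = 0 := by
    unfold relTrace
    apply Finset.sum_eq_zero
    intro i _
    exact zero_pow (by positivity)
  have htr_neg : ∀ x : F, relTrace q l (-x) = - relTrace q l x := by
    intro x
    have := htr_add x (-x)
    rw [add_neg_cancel, htr_zero] at this
    exact eq_neg_of_add_eq_zero_right this.symm
  -- value lands in roots of X^q - X
  have hval : ∀ x : F, (relTrace q l x) ^ q = relTrace q l x := by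
    intro x
    have hfrob : ∀ y : F, y ^ q = iterateFrobenius F p (m : ℕ) y := by
      intro y; rw [iterateFrobenius_def, ← hqp]
    rw [hfrob]
    unfold relTrace
    rw [map_sum]
    have h1 : ∀ i : ℕ, iterateFrobenius F p (m : ℕ) (x ^ q ^ i) = x ^ q ^ (i + 1) := by
      intro i
      rw [iterateFrobenius_def, ← pow_mul, ← hqp, ← pow_succ]
    rw [Finset.sum_congr rfl fun i _ => h1 i]
    have key := (Finset.sum_range_succ' (fun i => x ^ q ^ i) l).symm.trans
      (Finset.sum_range_succ (fun i => x ^ q ^ i) l)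
    simp only [pow_zero, pow_one] at key
    have hxl : x ^ q ^ l = x := by rw [← hF]; exact FiniteField.pow_card x
    rw [hxl] at key
    exact add_right_cancel key
  have htr_sub : ∀ x y : F, relTrace q l (x - y) = relTrace q l x - relTrace q l y := by
    intro x y; rw [sub_eq_add_neg, htr_add, htr_neg, sub_eq_add_neg]
  set Z := (univ : Finset F).filter (fun x => relTrace q l x = 0) with hZ
  have hZle : Z.card ≤ q ^ (l - 1) := by
    set P : F[X] := ∑ i ∈ range l, X ^ q ^ i with hP
    have hevalP : ∀ x : F, P.eval x = relTrace q l x := by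
      intro x; simp [hP, relTrace, eval_finset_sum]
    have hPne : P ≠ 0 := by
      intro h
      have hc : P.coeff (q ^ (l - 1)) = 1 := by
        rw [hP, finset_sum_coeff]
        rw [Finset.sum_eq_single (l - 1)]
        · simp [coeff_X_pow]
        · intro i hi hne
          rw [coeff_X_pow, if_neg]
          intro hEq
          exact hne (Nat.pow_right_injective hq2 hEq.symm)
        · intro hmem; exact absurd (mem_range.mpr (by omega)) hmem
      rw [h] at hc; simp at hc
    have hdeg : P.natDegree ≤ q ^ (l - 1) := by
      apply Polynomial.natDegree_sum_le_of_forall_le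
      intro i hi
      rw [natDegree_X_pow]
      exact Nat.pow_le_pow_right (by omega) (by have := mem_range.mp hi; omega)
    have hsub : Z ⊆ P.roots.toFinset := by
      intro x hx
      rw [Multiset.mem_toFinset, mem_roots hPne]
      rw [hZ, mem_filter] at hx
      rw [IsRoot, hevalP]; exact hx.2
    calc Z.card ≤ P.roots.toFinset.card := card_le_card hsub
      _ ≤ Multiset.card P.roots := Multiset.toFinset_card_le _
      _ ≤ P.natDegree := P.card_roots'
      _ ≤ q ^ (l - 1) := hdeg
  set A := (univ : Finset F).filter (fun y => y ^ q = y) with hA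
  have hAle : A.card ≤ q := by
    have hPne := FiniteField.X_pow_card_sub_X_ne_zero F (by omega : 1 < q)
    have hsub : A ⊆ (X ^ q - X : F[X]).roots.toFinset := by
      intro x hx
      rw [Multiset.mem_toFinset, mem_roots hPne]
      rw [hA, mem_filter] at hx
      simp [IsRoot, sub_eq_zero, hx.2]
    calc A.card ≤ (X ^ q - X : F[X]).roots.toFinset.card := card_le_card hsub
      _ ≤ Multiset.card (X ^ q - X : F[X]).roots := Multiset.toFinset_card_le _
      _ ≤ (X ^ q - X : F[X]).natDegree := Polynomial.card_roots' _
      _ ≤ q := by rw [FiniteField.X_pow_card_sub_X_natDegree_eq F (by omega : 1 < q)]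
  set Im := (univ : Finset F).image (fun x => relTrace q l x) with hIm
  have hfiber : ∀ y : F, (∃ x₀ : F, relTrace q l x₀ = y) →
      ((univ : Finset F).filter (fun x => relTrace q l x = y)).card = Z.card := by
    rintro y ⟨x₀, hx₀⟩
    apply Finset.card_bij (fun x _ => x - x₀)
    · intro a ha
      rw [mem_filter] at ha
      rw [hZ, mem_filter]
      exact ⟨mem_univ _, by rw [htr_sub, ha.2, hx₀, sub_self]⟩
    · intro a _ b _ h; exact sub_left_injective h
    · intro b hb
      rw [hZ, mem_filter] at hb
      refine ⟨b + x₀, ?_, by ring⟩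
      rw [mem_filter]
      exact ⟨mem_univ _, by rw [htr_add, hb.2, hx₀, zero_add]⟩
  have hFcard : q ^ l = Im.card * Z.card := by
    have hfib2 : ∀ y ∈ Im, ((univ : Finset F).filter (fun x => relTrace q l x = y)).card
        = Z.card := by
      intro y hy
      rw [hIm, mem_image] at hy
      obtain ⟨x₀, _, hx₀⟩ := hy
      exact hfiber y ⟨x₀, hx₀⟩
    calc q ^ l = (univ : Finset F).card := by rw [Finset.card_univ, hF]
      _ = ∑ y ∈ Im, ((univ : Finset F).filter (fun x => relTrace q l x = y)).card :=
          Finset.card_eq_sum_card_image (fun x => relTrace q l x) univ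
      _ = ∑ _y ∈ Im, Z.card := Finset.sum_congr rfl hfib2
      _ = Im.card * Z.card := by rw [Finset.sum_const, smul_eq_mul]
  have hImsubA : Im ⊆ A := by
    intro y hy
    rw [hIm, mem_image] at hy
    obtain ⟨x, _, hx⟩ := hy
    rw [hA, mem_filter]
    exact ⟨mem_univ _, by rw [← hx]; exact hval x⟩
  have hImle : Im.card ≤ q := le_trans (card_le_card hImsubA) hAle
  have hql : q ^ l = q * q ^ (l - 1) := by
    conv_lhs => rw [show l = 1 + (l - 1) by omega]
    rw [pow_add, pow_one]
  have hZcard : Z.card = q ^ (l - 1) := by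
    have h1 : q * q ^ (l - 1) ≤ q * Z.card := by
      rw [← hql, hFcard]
      exact Nat.mul_le_mul_right _ hImle
    have := Nat.le_of_mul_le_mul_left h1 (by omega)
    omega
  have hImcard : Im.card = q := by
    have : Im.card * q ^ (l - 1) = q * q ^ (l - 1) := by
      rw [← hql, hFcard, hZcard]
    exact Nat.eq_of_mul_eq_mul_right (by positivity) this
  have hImA : Im = A := Finset.eq_of_subset_of_card_le hImsubA (hAle.trans hImcard.ge)
  have hone : (1 : F) ∈ Im := by
    rw [hImA, hA, mem_filter]
    exact ⟨mem_univ _, one_pow q⟩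
  rw [hIm, mem_image] at hone
  obtain ⟨x₀, _, hx₀⟩ := hone
  have hfin : ((univ : Finset F).filter (fun x => relTrace q l x = 1)).card = q ^ (l - 1) := by
    rw [hfiber 1 ⟨x₀, hx₀⟩, hZcard]
  rw [← hfin]
  apply Finset.card_bij (fun (x : Fˣ) _ => (x : F))
  · intro a ha
    rw [mem_filter] at ha ⊢
    exact ⟨mem_univ _, ha.2⟩
  · intro a _ b _ h; exact Units.ext h
  · intro b hb
    rw [mem_filter] at hb
    have hb0 : b ≠ 0 := by
      intro h; rw [h, htr_zero] at hb; exact one_ne_zero hb.2.symm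
    exact ⟨Units.mk0 b hb0, mem_filter.mpr ⟨mem_univ _, hb.2⟩, rfl⟩

/-- a projective half-point set `D` in `𝔽_{q^l}^*` over `𝔽_q`
(`q` odd, `l` odd) has `|D| = (q^l-1)/2`, and for every `g ∈ 𝔽_{q^l}^*` and
every primitive element `ω` of `𝔽_q`,
`|gD ∩ R| + |gω⁻¹D ∩ R| = q^{l-1}` where `R = {x : tr_{q^l/q}(x) = 1}`. -/
theorem stmt13 {K F : Type*} [Field K] [Field F] [Fintype K] [Fintype F]
    [Algebra K F] (q l : ℕ) (hq : Fintype.card K = q) (hqodd : Odd q)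
    (hF : Fintype.card F = q ^ l) (hl : Odd l)
    (D : Finset Fˣ) (hD : IsHalfPointSet K F D) :
    D.card = (q ^ l - 1) / 2 ∧
    ∀ g : Fˣ, ∀ ω : Kˣ, (∀ z : Kˣ, z ∈ Subgroup.zpowers ω) →
      ((D.image (fun x => g * x)) ∩
          (univ : Finset Fˣ).filter (fun x : Fˣ => relTrace q l (x : F) = 1)).card +
        ((D.image (fun x => g * (unitsMapAlg K F ω)⁻¹ * x)) ∩
          (univ : Finset Fˣ).filter (fun x : Fˣ => relTrace q l (x : F) = 1)).card =
      q ^ (l - 1) := by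
  classical
  obtain ⟨hDsq, hDcoset⟩ := hD
  set ι := unitsMapAlg K F with hι
  have hιinj : Function.Injective ι := by
    intro a b h
    apply Units.ext
    apply (algebraMap K F).injective
    have := congrArg Units.val h
    simpa [hι, unitsMapAlg] using this
  have hq2 : 2 ≤ q := by rw [← hq]; exact Fintype.one_lt_card
  have hq3 : 3 ≤ q := by obtain ⟨t, ht⟩ := hqodd; omega
  have hl0 : 0 < l := hl.pos
  obtain ⟨t, ht⟩ := hqodd
  -- Part 1
  set H := ι.range with hH
  have hNcard : q ^ l - 1 = (q - 1) * Nat.card (Fˣ ⧸ H) := by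
    have h1 : Nat.card Fˣ = q ^ l - 1 := by
      rw [Nat.card_eq_fintype_card, Fintype.card_units, hF]
    have h2 : Nat.card H = q - 1 := by
      have e1 : Nat.card H = Nat.card (Set.range ι) := by
        rw [hH]; rfl
      rw [e1, Nat.card_congr (Equiv.ofInjective ι hιinj).symm, Nat.card_eq_fintype_card,
        Fintype.card_units, hq]
    have := Subgroup.card_eq_card_quotient_mul_card_subgroup H
    rw [h1, h2] at this
    rw [this, mul_comm]
  have hDcard : D.card = Nat.card (Fˣ ⧸ H) * ((q - 1) / 2) := by
    rw [Finset.card_eq_sum_card_fiberwise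
      (f := fun x : Fˣ => (QuotientGroup.mk x : Fˣ ⧸ H)) (t := univ) (fun x _ => mem_univ _)]
    have hfib : ∀ b ∈ (univ : Finset (Fˣ ⧸ H)),
        (D.filter (fun x : Fˣ => (QuotientGroup.mk x : Fˣ ⧸ H) = b)).card = (q - 1) / 2 := by
      intro b _
      obtain ⟨g, rfl⟩ := QuotientGroup.mk_surjective b
      have : (D.filter (fun x : Fˣ => (QuotientGroup.mk x : Fˣ ⧸ H) = QuotientGroup.mk g)) =
          (D.filter (fun x : Fˣ => ∃ y : Kˣ, x = g * ι y)) := by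
        apply Finset.filter_congr
        intro x _
        rw [QuotientGroup.eq]
        constructor
        · rintro ⟨y, hy⟩
          refine ⟨y⁻¹, ?_⟩
          rw [map_inv, hy]
          group
        · rintro ⟨y, rfl⟩
          refine ⟨y⁻¹, ?_⟩
          rw [map_inv]
          group
      rw [this, hDcoset g, hq]
    rw [Finset.sum_congr rfl hfib, Finset.sum_const, smul_eq_mul, Finset.card_univ,
      ← Nat.card_eq_fintype_card]
  constructor
  · rw [hDcard]
    have h1 : (q - 1) / 2 = t := by omega
    have h2 : q ^ l - 1 = 2 * (t * Nat.card (Fˣ ⧸ H)) := by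
      rw [hNcard, show q - 1 = 2 * t by omega, mul_assoc]
    rw [h1, h2, Nat.mul_div_cancel_left _ two_pos, mul_comm]
  -- Part 2
  intro g ω hω
  have hpow : ∀ y : Kˣ, ∃ k : ℤ, ω ^ k = y := fun y => Subgroup.mem_zpowers_iff.mp (hω y)
  have hsq : ∀ k : ℤ, Even k → IsSquare (ω ^ k) := by
    rintro k ⟨s, hs⟩
    exact ⟨ω ^ s, by rw [hs, zpow_add]⟩
  have key : ∀ x : Fˣ, (x ∈ D ↔ x * ι ω ∉ D) := by
    intro x
    have hcard := hDcoset x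
    rw [hq] at hcard
    constructor
    · intro hx hxω
      have hall : ∀ y : Kˣ, x * ι y ∈ D := by
        intro y
        obtain ⟨k, hk⟩ := hpow y
        rcases Int.even_or_odd k with he | ho
        · exact hDsq x hx y (hk ▸ hsq k he)
        · have hsq2 : IsSquare (ω⁻¹ * y) := by
            have e : ω⁻¹ * y = ω ^ (k - 1) := by
              rw [← hk, zpow_sub_one]; exact mul_comm _ _
            rw [e]
            exact hsq _ (by rcases ho with ⟨s, hs⟩; exact ⟨s, by omega⟩)
          have h2 := hDsq (x * ι ω) hxω (ω⁻¹ * y) hsq2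
          rwa [mul_assoc, ← map_mul, mul_inv_cancel_left] at h2
      have hsubset : (univ.image (fun y : Kˣ => x * ι y)) ⊆
          D.filter (fun z => ∃ y : Kˣ, z = x * ι y) := by
        intro z hz
        rw [mem_image] at hz
        obtain ⟨y, _, rfl⟩ := hz
        exact mem_filter.mpr ⟨hall y, y, rfl⟩
      have hcardim : (univ.image (fun y : Kˣ => x * ι y)).card = q - 1 := by
        rw [Finset.card_image_of_injective _
          (fun a b h => hιinj (mul_left_cancel h)), card_univ, Fintype.card_units, hq]
      have hle := card_le_card hsubset
      rw [hcardim, hcard] at hle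
      omega
    · intro hnx
      by_contra hx
      have hempty : D.filter (fun z => ∃ y : Kˣ, z = x * ι y) = ∅ := by
        rw [Finset.filter_eq_empty_iff]
        rintro z hzD ⟨y, rfl⟩
        obtain ⟨k, hk⟩ := hpow y
        rcases Int.even_or_odd k with he | ho
        · apply hx
          have h2 := hDsq _ hzD y⁻¹ (hk ▸ hsq k he).inv
          rwa [mul_assoc, ← map_mul, mul_inv_cancel, map_one, mul_one] at h2
        · apply hnx
          have hsq2 : IsSquare (ω * y⁻¹) := by
            have e : ω * y⁻¹ = ω ^ (1 - k) := by
              rw [← hk, zpow_sub, zpow_one]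
            rw [e]
            exact hsq _ (by rcases ho with ⟨s, hs⟩; exact ⟨-s, by omega⟩)
          have h2 := hDsq _ hzD (ω * y⁻¹) hsq2
          rwa [mul_assoc, ← map_mul,
            show y * (ω * y⁻¹) = ω by rw [mul_comm ω, mul_inv_cancel_left]] at h2
      rw [hempty] at hcard
      simp at hcard
      omega
  set R := (univ : Finset Fˣ).filter (fun x : Fˣ => relTrace q l (x : F) = 1) with hR
  have hRcard : R.card = q ^ (l - 1) := traceFiberCard q l hq hq3 hF hl0
  have him : ∀ (c x : Fˣ), (x ∈ D.image (fun z => c * z)) ↔ c⁻¹ * x ∈ D := by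
    intro c x
    rw [mem_image]
    constructor
    · rintro ⟨d, hd, rfl⟩; rwa [inv_mul_cancel_left]
    · intro h; exact ⟨c⁻¹ * x, h, by rw [mul_inv_cancel_left]⟩
  set A1 := (D.image (fun x => g * x)) ∩ R with hA1
  set A2 := (D.image (fun x => g * (ι ω)⁻¹ * x)) ∩ R with hA2
  have hA1sub : A1 ⊆ R := inter_subset_right
  have hA2eq : A2 = R \ A1 := by
    ext x
    rw [hA2, hA1, mem_sdiff, mem_inter, mem_inter, him, him]
    have hrw : (g * (ι ω)⁻¹)⁻¹ * x = (g⁻¹ * x) * ι ω := by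
      rw [mul_inv_rev, inv_inv, mul_assoc]; exact mul_comm _ _
    rw [hrw]
    have hk := key (g⁻¹ * x)
    tauto
  have hfin := Finset.card_sdiff_add_card_eq_card hA1sub
  rw [← hA2eq] at hfin
  omega
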